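/- arXiv:2306.10154 — 4 statements merged into one kernel-verified Lean document; each statement's English description precedes it below -/
import Mathlib

section
/- Let a=(a_1,…,a_m) and b=(b_1,…,b_t) be compositions of n such that the meander M(a|b) consists of a single path, so that g1 = p^A(a|b) and g2 = p^A(b|a) are Frobenius type-A seaweeds. Then the spectrum of g1 equals the spectrum of g2 as multisets, and the extended spectrum of g1 equals the extended spectrum of g2 as multisets. -/
namespace Seaweed

/-- Positions `i` and `j` (1-indexed) are joined by an arc of the composition `c`:
they lie in the same block of `c` and are placed symmetrically within it. -/
def blockPair (c : List ℕ) (i j : ℕ) : Prop :=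
  ∃ k, k < c.length ∧ (c.take k).sum < i ∧ (c.take k).sum < j ∧
    i + j = 2 * (c.take k).sum + c.getD k 0 + 1 ∧ i ≠ j

lemma blockPair_symm {c : List ℕ} {i j : ℕ} (h : blockPair c i j) : blockPair c j i := by
  obtain ⟨k, hk, hi, hj, hsum, hne⟩ := h
  exact ⟨k, hk, hj, hi, by omega, hne.symm⟩

/-- The meander `M(a|b)` of the pair of compositions `(a, b)`, as a simple graph on `ℕ`
(positions `1, …, a.sum` carry the meander; all other naturals are isolated).
Top edges come from `a`, bottom edges from `b`. -/
def meander (a b : List ℕ) : SimpleGraph ℕ where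
  Adj i j := blockPair a i j ∨ blockPair b i j
  symm := ⟨fun _ _ h => h.imp blockPair_symm blockPair_symm⟩
  loopless := ⟨by
    rintro i (⟨k, _, _, _, _, hne⟩ | ⟨k, _, _, _, _, hne⟩) <;> exact hne rfl⟩

/-- The directed-edge relation of the oriented meander: top edges are oriented
right-to-left, bottom edges left-to-right. -/
def dirEdge (a b : List ℕ) (x y : ℕ) : Prop :=
  (blockPair a x y ∧ y < x) ∨ (blockPair b x y ∧ x < y)

open scoped Classical in
/-- The weight of a walk in the oriented meander: each step taken in agreement with
the orientation counts `+1`, each step against it counts `-1`. -/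
noncomputable def walkWeight (a b : List ℕ) {i j : ℕ} (w : (meander a b).Walk i j) : ℤ :=
  (w.darts.map fun d => if dirEdge a b d.toProd.1 d.toProd.2 then (1 : ℤ) else -1).sum

open scoped Classical in
/-- `w(P_{i,j}(a|b))`: the weight of the (unique, when the meander consists of a single
path) path from `v_i` to `v_j` in the oriented meander. -/
noncomputable def pathWeight (a b : List ℕ) (i j : ℕ) : ℤ :=
  if h : ∃ p : (meander a b).Walk i j, p.IsPath then walkWeight a b h.choose else 0

/-- The meander of `(a, b)` consists of a single path: it has no cycles (in particular no
doubled top/bottom edge, which would be a 2-cycle) and all positions `1, …, n` are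
connected.  This is exactly the condition for `p^A(a|b)` to be Frobenius. -/
def IsSinglePath (a b : List ℕ) : Prop :=
  (meander a b).IsAcyclic ∧
  (∀ i j, i ∈ Finset.Icc 1 a.sum → j ∈ Finset.Icc 1 a.sum → (meander a b).Reachable i j) ∧
  ∀ i j, ¬(blockPair a i j ∧ blockPair b i j)

/-- `i` and `j` lie in the same block of the composition `c`. -/
def sameBlock (c : List ℕ) (i j : ℕ) : Prop :=
  ∃ k, k < c.length ∧ (c.take k).sum < i ∧ i ≤ (c.take k).sum + c.getD k 0 ∧
    (c.take k).sum < j ∧ j ≤ (c.take k).sum + c.getD k 0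

/-- The matrix position `(i, j)` belongs to the seaweed `p^A(a|b)`. -/
def seaweedPos (a b : List ℕ) (i j : ℕ) : Prop :=
  (j ≤ i ∧ sameBlock a i j) ∨ (i ≤ j ∧ sameBlock b i j)

open scoped Classical in
/-- The block of the spectrum matrix of `p^A(a|b)` on rows `R` and columns `C`:
the multiset of weights `w(P_{i,j})` over positions `(i,j)` of the seaweed with
`i ∈ R`, `j ∈ C`. -/
noncomputable def spectrumBlock (a b : List ℕ) (R C : Finset ℕ) : Multiset ℤ :=
  ((R ×ˢ C).filter fun p => seaweedPos a b p.1 p.2).val.map fun p => pathWeight a b p.1 p.2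

/-- The multiset of all values of the extended spectrum matrix of `p^A(a|b)`:
the weights `w(P_{i,j})` over all pairs `1 ≤ i, j ≤ n`. -/
noncomputable def extendedValues (a b : List ℕ) : Multiset ℤ :=
  (Finset.Icc 1 a.sum ×ˢ Finset.Icc 1 a.sum).val.map fun p => pathWeight a b p.1 p.2

/-- The spectrum of a Frobenius type-A seaweed `p^A(a|b)`: the multiset of entries of
its spectrum matrix, with one copy of `0` removed. -/
noncomputable def spectrum (a b : List ℕ) : Multiset ℤ :=
  spectrumBlock a b (Finset.Icc 1 a.sum) (Finset.Icc 1 a.sum) - {0}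

/-- The extended spectrum: all entries of the extended spectrum matrix, with one copy
of `0` removed. -/
noncomputable def extendedSpectrum (a b : List ℕ) : Multiset ℤ :=
  extendedValues a b - {0}

/-- Listing the distinct values of the multiset `S` in increasing order, the
corresponding sequence of multiplicities is log-concave. -/
def HasLogConcaveSpectrum (S : Multiset ℤ) : Prop :=
  ∀ i : ℕ, 0 < i → i + 1 < (S.toFinset.sort (· ≤ ·)).length →
    S.count ((S.toFinset.sort (· ≤ ·)).getD (i - 1) 0) *
      S.count ((S.toFinset.sort (· ≤ ·)).getD (i + 1) 0) ≤
      S.count ((S.toFinset.sort (· ≤ ·)).getD i 0) ^ 2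


lemma sameBlock_symm {c : List ℕ} {i j : ℕ} (h : sameBlock c i j) : sameBlock c j i := by
  obtain ⟨k, h1, h2, h3, h4, h5⟩ := h
  exact ⟨k, h1, h4, h5, h2, h3⟩

lemma blockPair_ne {c : List ℕ} {i j : ℕ} (h : blockPair c i j) : i ≠ j := by
  obtain ⟨k, -, -, -, -, hne⟩ := h
  exact hne

lemma seaweedPos_swap {a b : List ℕ} {i j : ℕ} :
    seaweedPos b a i j ↔ seaweedPos a b j i := by
  constructor
  · rintro (⟨h1, h2⟩ | ⟨h1, h2⟩)
    · exact Or.inr ⟨h1, sameBlock_symm h2⟩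
    · exact Or.inl ⟨h1, sameBlock_symm h2⟩
  · rintro (⟨h1, h2⟩ | ⟨h1, h2⟩)
    · exact Or.inr ⟨h1, sameBlock_symm h2⟩
    · exact Or.inl ⟨h1, sameBlock_symm h2⟩

lemma dirEdge_ba_iff {a b : List ℕ} (hd : ∀ i j, ¬(blockPair a i j ∧ blockPair b i j))
    {x y : ℕ} (h : (meander a b).Adj x y) : dirEdge b a x y ↔ ¬ dirEdge a b x y := by
  rcases h with hA | hB
  · have hB' : ¬ blockPair b x y := fun hb => hd x y ⟨hA, hb⟩
    have hne := blockPair_ne hA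
    unfold dirEdge
    constructor
    · rintro (⟨hb, _⟩ | ⟨_, hxy⟩)
      · exact absurd hb hB'
      · rintro (⟨_, hyx⟩ | ⟨hb, _⟩)
        · omega
        · exact hB' hb
    · intro hnot
      rcases Nat.lt_or_ge x y with hlt | hge
      · exact Or.inr ⟨hA, hlt⟩
      · exact absurd (Or.inl ⟨hA, by omega⟩) hnot
  · have hA' : ¬ blockPair a x y := fun ha' => hd x y ⟨ha', hB⟩
    have hne := blockPair_ne hB
    unfold dirEdge
    constructor
    · rintro (⟨hb, hyx⟩ | ⟨ha', _⟩)
      · rintro (⟨ha', _⟩ | ⟨_, hxy⟩)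
        · exact hA' ha'
        · omega
      · exact absurd ha' hA'
    · intro hnot
      rcases Nat.lt_or_ge y x with hlt | hge
      · exact Or.inl ⟨hB, hlt⟩
      · exact absurd (Or.inr ⟨hB, by omega⟩) hnot

lemma dirEdge_rev_iff {a b : List ℕ} (hd : ∀ i j, ¬(blockPair a i j ∧ blockPair b i j))
    {x y : ℕ} (h : (meander a b).Adj x y) : dirEdge a b y x ↔ ¬ dirEdge a b x y := by
  rcases h with hA | hB
  · have hB' : ¬ blockPair b x y := fun hb => hd x y ⟨hA, hb⟩
    have hne := blockPair_ne hA
    unfold dirEdge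
    constructor
    · rintro (⟨_, hxy⟩ | ⟨hb, _⟩)
      · rintro (⟨_, hyx⟩ | ⟨hb, _⟩)
        · omega
        · exact hB' hb
      · exact absurd (blockPair_symm hb) hB'
    · intro hnot
      rcases Nat.lt_or_ge x y with hlt | hge
      · exact Or.inl ⟨blockPair_symm hA, hlt⟩
      · exact absurd (Or.inl ⟨hA, by omega⟩) hnot
  · have hA' : ¬ blockPair a x y := fun ha' => hd x y ⟨ha', hB⟩
    have hne := blockPair_ne hB
    unfold dirEdge
    constructor
    · rintro (⟨ha', _⟩ | ⟨_, hyx⟩)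
      · exact absurd (blockPair_symm ha') hA'
      · rintro (⟨ha', _⟩ | ⟨_, hxy⟩)
        · exact hA' ha'
        · omega
    · intro hnot
      rcases Nat.lt_or_ge y x with hlt | hge
      · exact Or.inr ⟨blockPair_symm hB, hlt⟩
      · exact absurd (Or.inr ⟨hB, by omega⟩) hnot

open scoped Classical in
lemma weight_step_ba {a b : List ℕ} (hd : ∀ i j, ¬(blockPair a i j ∧ blockPair b i j))
    {x y : ℕ} (h : (meander a b).Adj x y) :
    (if dirEdge b a x y then (1 : ℤ) else -1) = -(if dirEdge a b x y then (1 : ℤ) else -1) := by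
  rcases Classical.em (dirEdge a b x y) with h1 | h1
  · rw [if_pos h1, if_neg (by rw [dirEdge_ba_iff hd h]; exact not_not_intro h1)]
  · rw [if_neg h1, if_pos ((dirEdge_ba_iff hd h).mpr h1)]; norm_num

open scoped Classical in
lemma weight_step_rev {a b : List ℕ} (hd : ∀ i j, ¬(blockPair a i j ∧ blockPair b i j))
    {x y : ℕ} (h : (meander a b).Adj x y) :
    (if dirEdge a b y x then (1 : ℤ) else -1) = -(if dirEdge a b x y then (1 : ℤ) else -1) := by
  rcases Classical.em (dirEdge a b x y) with h1 | h1
  · rw [if_pos h1, if_neg (by rw [dirEdge_rev_iff hd h]; exact not_not_intro h1)]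
  · rw [if_neg h1, if_pos ((dirEdge_rev_iff hd h).mpr h1)]; norm_num

lemma walk_comm {a b : List ℕ} (hd : ∀ i j, ¬(blockPair a i j ∧ blockPair b i j))
    {i j : ℕ} (w : (meander a b).Walk i j) :
    ∃ w' : (meander b a).Walk i j, w'.support = w.support ∧
      walkWeight b a w' = - walkWeight a b w := by
  induction w with
  | nil => exact ⟨SimpleGraph.Walk.nil, rfl, by simp [walkWeight]⟩
  | @cons u v x h p ih =>
    obtain ⟨w', hs, hw⟩ := ih
    have h' : (meander b a).Adj u v := Or.elim h Or.inr Or.inl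
    refine ⟨SimpleGraph.Walk.cons h' w', by simp [hs], ?_⟩
    simp only [walkWeight, SimpleGraph.Walk.darts_cons, List.map_cons, List.sum_cons] at hw ⊢
    rw [weight_step_ba hd h, hw]
    ring

lemma neg_list_sum (l : List ℤ) : (l.map fun x => -x).sum = - l.sum := by
  induction l with
  | nil => simp
  | cons x xs ih => simp [ih]; ring

lemma walkWeight_reverse {a b : List ℕ} (hd : ∀ i j, ¬(blockPair a i j ∧ blockPair b i j))
    {i j : ℕ} (w : (meander a b).Walk i j) :
    walkWeight a b w.reverse = - walkWeight a b w := by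
  classical
  unfold walkWeight
  rw [SimpleGraph.Walk.darts_reverse, List.map_reverse, List.sum_reverse, List.map_map]
  have hcongr : w.darts.map ((fun d : (meander a b).Dart =>
        if dirEdge a b d.toProd.1 d.toProd.2 then (1 : ℤ) else -1) ∘ SimpleGraph.Dart.symm)
      = w.darts.map fun d => -(if dirEdge a b d.toProd.1 d.toProd.2 then (1 : ℤ) else -1) := by
    apply List.map_congr_left
    intro d _
    exact weight_step_rev hd d.adj
  rw [hcongr, show (w.darts.map fun d : (meander a b).Dart =>
      -(if dirEdge a b d.toProd.1 d.toProd.2 then (1 : ℤ) else -1))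
      = ((w.darts.map fun d : (meander a b).Dart =>
        if dirEdge a b d.toProd.1 d.toProd.2 then (1 : ℤ) else -1).map fun x => -x) by
    rw [List.map_map]; rfl]
  exact neg_list_sum _

lemma pathWeight_rev {a b : List ℕ} (hac : (meander a b).IsAcyclic)
    (hd : ∀ i j, ¬(blockPair a i j ∧ blockPair b i j)) (i j : ℕ) :
    pathWeight a b j i = - pathWeight a b i j := by
  classical
  unfold pathWeight
  by_cases hij : ∃ p : (meander a b).Walk i j, p.IsPath
  · have hji : ∃ p : (meander a b).Walk j i, p.IsPath :=
      ⟨hij.choose.reverse, hij.choose_spec.reverse⟩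
    rw [dif_pos hij, dif_pos hji]
    have hu : (⟨hji.choose, hji.choose_spec⟩ : (meander a b).Path j i) =
        ⟨hij.choose.reverse, hij.choose_spec.reverse⟩ := hac.path_unique _ _
    have hu' : hji.choose = hij.choose.reverse := congrArg Subtype.val hu
    rw [hu', walkWeight_reverse hd]
  · have hji : ¬ ∃ p : (meander a b).Walk j i, p.IsPath := by
      rintro ⟨p, hp⟩
      exact hij ⟨p.reverse, hp.reverse⟩
    rw [dif_neg hij, dif_neg hji, neg_zero]

lemma pathWeight_ba {a b : List ℕ} (hac : (meander a b).IsAcyclic)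
    (hd : ∀ i j, ¬(blockPair a i j ∧ blockPair b i j)) (i j : ℕ) :
    pathWeight b a i j = - pathWeight a b i j := by
  classical
  have hd' : ∀ i j, ¬(blockPair b i j ∧ blockPair a i j) :=
    fun i j ⟨h1, h2⟩ => hd i j ⟨h2, h1⟩
  unfold pathWeight
  by_cases hba : ∃ p : (meander b a).Walk i j, p.IsPath
  · obtain ⟨w, hsup, hw⟩ := walk_comm hd' hba.choose
    have hwpath : w.IsPath := by
      rw [SimpleGraph.Walk.isPath_def, hsup]
      exact hba.choose_spec.support_nodup
    have hab : ∃ p : (meander a b).Walk i j, p.IsPath := ⟨w, hwpath⟩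
    rw [dif_pos hba, dif_pos hab]
    have hu : (⟨hab.choose, hab.choose_spec⟩ : (meander a b).Path i j) =
        ⟨w, hwpath⟩ := hac.path_unique _ _
    have hu' : hab.choose = w := congrArg Subtype.val hu
    rw [hu']
    omega
  · have hab : ¬ ∃ p : (meander a b).Walk i j, p.IsPath := by
      rintro ⟨p, hp⟩
      obtain ⟨w', hsup, -⟩ := walk_comm hd p
      exact hba ⟨w', by rw [SimpleGraph.Walk.isPath_def, hsup]; exact hp.support_nodup⟩
    rw [dif_neg hba, dif_neg hab, neg_zero]

lemma pathWeight_swap {a b : List ℕ} (hac : (meander a b).IsAcyclic)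
    (hd : ∀ i j, ¬(blockPair a i j ∧ blockPair b i j)) (i j : ℕ) :
    pathWeight b a i j = pathWeight a b j i := by
  rw [pathWeight_ba hac hd, pathWeight_rev hac hd, neg_neg]

/-- If the meander of the compositions `a`, `b` of `n` is a single path, then the
(extended) spectra of the Frobenius type-A seaweeds `p^A(a|b)` and `p^A(b|a)`
coincide as multisets. -/
theorem statement2 (n : ℕ) (a b : List ℕ)
    (ha : ∀ x ∈ a, 0 < x) (hb : ∀ x ∈ b, 0 < x)
    (hsa : a.sum = n) (hsb : b.sum = n)
    (hpath : IsSinglePath a b) :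
    spectrum a b = spectrum b a ∧ extendedSpectrum a b = extendedSpectrum b a := by
  classical
  obtain ⟨hac, -, hd⟩ := hpath
  have hkey : ∀ i j, pathWeight b a i j = pathWeight a b j i := pathWeight_swap hac hd
  set R : Finset ℕ := Finset.Icc 1 n with hR
  have hRa : Finset.Icc 1 a.sum = R := by rw [hsa]
  have hRb : Finset.Icc 1 b.sum = R := by rw [hsb]
  have hsq : (R ×ˢ R) = (R ×ˢ R).map (Equiv.prodComm ℕ ℕ).toEmbedding := by
    ext p
    rw [Finset.mem_map_equiv]
    simp [Finset.mem_product, and_comm]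
  have hblock : spectrumBlock b a R R = spectrumBlock a b R R := by
    unfold spectrumBlock
    have hset : ((R ×ˢ R).filter fun p => seaweedPos b a p.1 p.2)
        = ((R ×ˢ R).filter fun p => seaweedPos a b p.1 p.2).map
            (Equiv.prodComm ℕ ℕ).toEmbedding := by
      ext p
      rw [Finset.mem_map_equiv]
      simp only [Finset.mem_filter, Finset.mem_product, Equiv.prodComm_symm,
        Equiv.prodComm_apply, Prod.fst_swap, Prod.snd_swap]
      constructor
      · rintro ⟨⟨h1, h2⟩, h3⟩
        exact ⟨⟨h2, h1⟩, seaweedPos_swap.mp h3⟩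
      · rintro ⟨⟨h1, h2⟩, h3⟩
        exact ⟨⟨h2, h1⟩, seaweedPos_swap.mpr h3⟩
    rw [hset, Finset.map_val, Multiset.map_map]
    apply Multiset.map_congr rfl
    intro p _
    exact hkey p.2 p.1
  constructor
  · unfold spectrum
    rw [hRa, hRb, hblock]
  · unfold extendedSpectrum extendedValues
    rw [hRa, hRb]
    congr 1
    have h1 : (R ×ˢ R).val.map (fun p : ℕ × ℕ => pathWeight b a p.1 p.2)
        = (R ×ˢ R).val.map (fun p : ℕ × ℕ => pathWeight a b p.2 p.1) :=
      Multiset.map_congr rfl (fun p _ => hkey p.1 p.2)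
    rw [h1]
    conv_lhs => rw [hsq]
    rw [Finset.map_val, Multiset.map_map]
    rfl

end Seaweed
end

section
/- Let k1, k2, m be positive integers with gcd(k1,k2)=1, and let g1 = p^A(mk1+k2 | k1 / (m+1)k1+k2) and g2 = p^A((m−1)k1+k2 | k1 / mk1+k2), which are Frobenius type-A seaweeds. Then the block of the spectrum matrix of g1 on rows {1,…,mk1+k2} and columns {1,…,mk1+k2} is equal, as a multiset, to the multiset of values of the extended spectrum matrix of g2. -/
namespace Seaweed

-- ### auxiliary development


lemma blockPair_pair (p q i j : ℕ) :
    blockPair [p, q] i j ↔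
      (0 < i ∧ 0 < j ∧ i + j = p + 1 ∧ i ≠ j) ∨
      (p < i ∧ p < j ∧ i + j = 2 * p + q + 1 ∧ i ≠ j) := by
  constructor
  · rintro ⟨k, hk, hi, hj, hs, hne⟩
    simp only [List.length_cons, List.length_nil] at hk
    interval_cases k <;> simp_all [List.take, List.getD] <;> omega
  · rintro (⟨hi, hj, hs, hne⟩ | ⟨hi, hj, hs, hne⟩)
    · exact ⟨0, by simp, by simpa, by simpa, by simpa using hs, hne⟩
    · exact ⟨1, by simp, by simpa, by simpa, by simp; omega, hne⟩

lemma blockPair_single (r i j : ℕ) :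
    blockPair [r] i j ↔ (0 < i ∧ 0 < j ∧ i + j = r + 1 ∧ i ≠ j) := by
  constructor
  · rintro ⟨k, hk, hi, hj, hs, hne⟩
    simp only [List.length_cons, List.length_nil] at hk
    interval_cases k <;> simp_all [List.take, List.getD] <;> omega
  · rintro ⟨hi, hj, hs, hne⟩
    exact ⟨0, by simp, by simpa, by simpa, by simpa using hs, hne⟩

lemma dirEdge_iff (A B x y : ℕ) :
    dirEdge [A, B] [A + B] x y ↔
      (0 < x ∧ 0 < y ∧ x + y = A + 1 ∧ y < x) ∨
      (A < x ∧ A < y ∧ x + y = 2 * A + B + 1 ∧ y < x) ∨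
      (0 < x ∧ 0 < y ∧ x + y = A + B + 1 ∧ x < y) := by
  unfold dirEdge
  rw [blockPair_pair, blockPair_single]
  omega

lemma adj_iff (A B x y : ℕ) :
    (meander [A, B] [A + B]).Adj x y ↔
      (0 < x ∧ 0 < y ∧ x + y = A + 1 ∧ x ≠ y) ∨
      (A < x ∧ A < y ∧ x + y = 2 * A + B + 1 ∧ x ≠ y) ∨
      (0 < x ∧ 0 < y ∧ x + y = A + B + 1 ∧ x ≠ y) := by
  show blockPair _ x y ∨ blockPair _ x y ↔ _
  rw [blockPair_pair, blockPair_single]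
  omega

-- ### potentials

def IsPot (A B : ℕ) (φ : ℕ → ℤ) : Prop :=
  ∀ x y, dirEdge [A, B] [A + B] x y → φ y = φ x + 1

lemma adj_dirEdge {a b : List ℕ} {x y : ℕ} (h : (meander a b).Adj x y) :
    dirEdge a b x y ∨ dirEdge a b y x := by
  rcases h with hp | hp
  · obtain ⟨k, h1, h2, h3, h4, hne⟩ := hp
    rcases Nat.lt_or_ge y x with hlt | hge
    · exact Or.inl (Or.inl ⟨⟨k, h1, h2, h3, h4, hne⟩, hlt⟩)
    · exact Or.inr (Or.inl ⟨blockPair_symm ⟨k, h1, h2, h3, h4, hne⟩, by omega⟩)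
  · obtain ⟨k, h1, h2, h3, h4, hne⟩ := hp
    rcases Nat.lt_or_ge x y with hlt | hge
    · exact Or.inl (Or.inr ⟨⟨k, h1, h2, h3, h4, hne⟩, hlt⟩)
    · exact Or.inr (Or.inr ⟨blockPair_symm ⟨k, h1, h2, h3, h4, hne⟩, by omega⟩)

lemma walkWeight_eq {a b : List ℕ} {φ : ℕ → ℤ}
    (hφ : ∀ x y, dirEdge a b x y → φ y = φ x + 1) :
    ∀ {i j : ℕ} (w : (meander a b).Walk i j), walkWeight a b w = φ j - φ i := by
  classical
  intro i j w
  induction w with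
  | nil => simp [walkWeight]
  | @cons u v j hadj p ih =>
    have hstep : (if dirEdge a b u v then (1 : ℤ) else -1) = φ v - φ u := by
      by_cases hd : dirEdge a b u v
      · rw [if_pos hd, hφ _ _ hd]; ring
      · rw [if_neg hd]
        rcases adj_dirEdge hadj with h | h
        · exact absurd h hd
        · rw [hφ _ _ h]; ring
    show ((SimpleGraph.Walk.cons hadj p).darts.map
      fun d => if dirEdge a b d.toProd.1 d.toProd.2 then (1 : ℤ) else -1).sum = _
    rw [SimpleGraph.Walk.darts_cons, List.map_cons, List.sum_cons]
    have : (p.darts.map fun d =>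
        if dirEdge a b d.toProd.1 d.toProd.2 then (1 : ℤ) else -1).sum = φ j - φ v := ih
    simp only [SimpleGraph.Dart.toProd]
    rw [this, hstep]
    ring

lemma pathWeight_eq {a b : List ℕ} {φ : ℕ → ℤ}
    (hφ : ∀ x y, dirEdge a b x y → φ y = φ x + 1) {i j : ℕ}
    (hr : (meander a b).Reachable i j) :
    pathWeight a b i j = φ j - φ i := by
  have h : ∃ p : (meander a b).Walk i j, p.IsPath := by
    obtain ⟨w⟩ := hr
    exact ⟨w.toPath.1, w.toPath.2⟩
  rw [pathWeight, dif_pos h]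
  exact walkWeight_eq hφ h.choose

-- step construction
def stepφ (A B : ℕ) (φ : ℕ → ℤ) : ℕ → ℤ :=
  fun i => if i ≤ A then φ (A + 1 - i) - 1 else φ (i - B)

lemma isPot_step {A B : ℕ} {φ : ℕ → ℤ} (hB : 1 ≤ B) (hBA : B < A)
    (h : IsPot (A - B) B φ) : IsPot A B (stepφ A B φ) := by
  have h' : ∀ x y, (0 < x ∧ 0 < y ∧ x + y = (A - B) + 1 ∧ y < x) ∨
      ((A - B) < x ∧ (A - B) < y ∧ x + y = 2 * (A - B) + B + 1 ∧ y < x) ∨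
      (0 < x ∧ 0 < y ∧ x + y = (A - B) + B + 1 ∧ x < y) → φ y = φ x + 1 :=
    fun x y hh => h x y ((dirEdge_iff (A - B) B x y).mpr hh)
  intro x y hxy
  rw [dirEdge_iff] at hxy
  unfold stepφ
  rcases hxy with ⟨hx, hy, hs, hlt⟩ | ⟨hx, hy, hs, hlt⟩ | ⟨hx, hy, hs, hlt⟩
  · -- top block 1 of big ↦ bottom of small
    rw [if_pos (by omega : y ≤ A), if_pos (by omega : x ≤ A)]
    have := h' (A + 1 - x) (A + 1 - y) (by omega)
    linarith
  · -- top block 2 of big ↦ top block 2 of small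
    rw [if_neg (by omega : ¬ y ≤ A), if_neg (by omega : ¬ x ≤ A)]
    have := h' (x - B) (y - B) (by omega)
    linarith
  · -- bottom of big
    by_cases hxB : x ≤ B
    · -- short-circuit case
      rw [if_neg (by omega : ¬ y ≤ A), if_pos (by omega : x ≤ A)]
      have : y - B = A + 1 - x := by omega
      rw [this]; ring
    · -- ↦ top block 1 of small
      rw [if_pos (by omega : y ≤ A), if_pos (by omega : x ≤ A)]
      have := h' (A + 1 - x) (A + 1 - y) (by omega)
      linarith

lemma isPot_mirror {A B : ℕ} {φ : ℕ → ℤ} (h : IsPot B A φ) :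
    IsPot A B (fun i => -φ (A + B + 1 - i)) := by
  have h' : ∀ x y, (0 < x ∧ 0 < y ∧ x + y = B + 1 ∧ y < x) ∨
      (B < x ∧ B < y ∧ x + y = 2 * B + A + 1 ∧ y < x) ∨
      (0 < x ∧ 0 < y ∧ x + y = B + A + 1 ∧ x < y) → φ y = φ x + 1 :=
    fun x y hh => h x y ((dirEdge_iff B A x y).mpr hh)
  intro x y hxy
  rw [dirEdge_iff] at hxy
  simp only
  rcases hxy with ⟨hx, hy, hs, hlt⟩ | ⟨hx, hy, hs, hlt⟩ | ⟨hx, hy, hs, hlt⟩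
  · have := h' (A + B + 1 - y) (A + B + 1 - x) (by omega)
    linarith
  · have := h' (A + B + 1 - y) (A + B + 1 - x) (by omega)
    linarith
  · have := h' (A + B + 1 - y) (A + B + 1 - x) (by omega)
    linarith

lemma exists_pot_aux : ∀ s A B : ℕ, A + B ≤ s → 1 ≤ A → 1 ≤ B →
    Nat.gcd A B = 1 → ∃ φ, IsPot A B φ := by
  intro s
  induction s with
  | zero => intro A B h hA hB _; omega
  | succ s ih =>
    intro A B hs hA hB hg
    rcases lt_trichotomy A B with hlt | heq | hgt
    · have hg2 : Nat.gcd (B - A) A = 1 := by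
        rw [Nat.gcd_sub_self_left (by omega)]
        rw [Nat.gcd_comm]; exact hg
      obtain ⟨φ'', h''⟩ := ih (B - A) A (by omega) (by omega) hA hg2
      exact ⟨_, isPot_mirror (isPot_step hA hlt h'')⟩
    · subst heq
      have : A = 1 := by rw [Nat.gcd_self] at hg; exact hg
      subst this
      refine ⟨fun x => (x : ℤ), ?_⟩
      intro x y hxy
      rw [dirEdge_iff] at hxy
      show (y : ℤ) = (x : ℤ) + 1
      omega
    · have hg2 : Nat.gcd (A - B) B = 1 := by
        rw [Nat.gcd_sub_self_left (by omega)]; exact hg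
      obtain ⟨φ', h'⟩ := ih (A - B) B (by omega) (by omega) hB hg2
      exact ⟨_, isPot_step hB hgt h'⟩

-- ### reachability

def ReachAll (A B : ℕ) : Prop :=
  ∀ i j, 1 ≤ i → i ≤ A + B → 1 ≤ j → j ≤ A + B →
    (meander [A, B] [A + B]).Reachable i j

lemma reach_map {G H : SimpleGraph ℕ} (f : ℕ → ℕ)
    (hf : ∀ x y, G.Adj x y → H.Reachable (f x) (f y)) :
    ∀ {u v : ℕ}, G.Reachable u v → H.Reachable (f u) (f v) := by
  intro u v h
  obtain ⟨w⟩ := h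
  induction w with
  | nil => exact SimpleGraph.Reachable.refl _
  | cons hadj p ih => exact (hf _ _ hadj).trans ih

lemma reach_mirror {A B : ℕ} (h : ReachAll B A) : ReachAll A B := by
  intro i j hi1 hi2 hj1 hj2
  have hf : ∀ x y, (meander [B, A] [B + A]).Adj x y →
      (meander [A, B] [A + B]).Reachable (A + B + 1 - x) (A + B + 1 - y) := by
    intro x y hxy
    rw [adj_iff] at hxy
    refine SimpleGraph.Adj.reachable ?_
    rw [adj_iff]
    omega
  have := reach_map _ hf (h (A + B + 1 - i) (A + B + 1 - j)
    (by omega) (by omega) (by omega) (by omega))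
  rw [show A + B + 1 - (A + B + 1 - i) = i by omega,
      show A + B + 1 - (A + B + 1 - j) = j by omega] at this
  exact this

lemma reach_step {A B : ℕ} (hB : 1 ≤ B) (hBA : B < A)
    (h : ReachAll (A - B) B) : ReachAll A B := by
  have hf : ∀ x y, (meander [A - B, B] [(A - B) + B]).Adj x y →
      (meander [A, B] [A + B]).Reachable (A + 1 - x) (A + 1 - y) := by
    intro x y hxy
    rw [adj_iff] at hxy
    rcases hxy with ⟨hx, hy, hs, hne⟩ | ⟨hx, hy, hs, hne⟩ | ⟨hx, hy, hs, hne⟩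
    · -- top1 small ↦ bottom big
      exact SimpleGraph.Adj.reachable (by rw [adj_iff]; omega)
    · -- top2 small ↦ detour through big-block-2
      set u := A + 1 - x with hu
      set v := A + 1 - y with hv
      have huB : 1 ≤ u ∧ u ≤ B := by omega
      have huv : u + v = B + 1 := by omega
      have s1 : (meander [A, B] [A + B]).Reachable u (A + B + 1 - u) :=
        SimpleGraph.Adj.reachable (by rw [adj_iff]; omega)
      have s3 : (meander [A, B] [A + B]).Reachable (A + u) v :=
        SimpleGraph.Adj.reachable (by rw [adj_iff]; omega)
      have s2 : (meander [A, B] [A + B]).Reachable (A + B + 1 - u) (A + u) := by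
        by_cases hfix : A + B + 1 - u = A + u
        · rw [hfix]
        · exact SimpleGraph.Adj.reachable (by rw [adj_iff]; omega)
      exact (s1.trans s2).trans s3
    · -- bottom small ↦ top1 big
      exact SimpleGraph.Adj.reachable (by rw [adj_iff]; omega)
  have key : ∀ i j, 1 ≤ i → i ≤ A → 1 ≤ j → j ≤ A →
      (meander [A, B] [A + B]).Reachable i j := by
    intro i j hi1 hi2 hj1 hj2
    have := reach_map _ hf (h (A + 1 - i) (A + 1 - j)
      (by omega) (by omega) (by omega) (by omega))
    rw [show A + 1 - (A + 1 - i) = i by omega,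
        show A + 1 - (A + 1 - j) = j by omega] at this
    exact this
  have lower : ∀ i, 1 ≤ i → i ≤ A + B →
      ∃ i', 1 ≤ i' ∧ i' ≤ A ∧ (meander [A, B] [A + B]).Reachable i i' := by
    intro i h1 h2
    by_cases hiA : i ≤ A
    · exact ⟨i, h1, hiA, SimpleGraph.Reachable.refl _⟩
    · exact ⟨A + B + 1 - i, by omega, by omega,
        SimpleGraph.Adj.reachable (by rw [adj_iff]; omega)⟩
  intro i j hi1 hi2 hj1 hj2
  obtain ⟨i', hi'1, hi'2, hri⟩ := lower i hi1 hi2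
  obtain ⟨j', hj'1, hj'2, hrj⟩ := lower j hj1 hj2
  exact (hri.trans (key i' j' hi'1 hi'2 hj'1 hj'2)).trans hrj.symm

lemma exists_reach_aux : ∀ s A B : ℕ, A + B ≤ s → 1 ≤ A → 1 ≤ B →
    Nat.gcd A B = 1 → ReachAll A B := by
  intro s
  induction s with
  | zero => intro A B h hA hB _; omega
  | succ s ih =>
    intro A B hs hA hB hg
    rcases lt_trichotomy A B with hlt | heq | hgt
    · have hg2 : Nat.gcd (B - A) A = 1 := by
        rw [Nat.gcd_sub_self_left (by omega)]
        rw [Nat.gcd_comm]; exact hg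
      exact reach_mirror (reach_step hA hlt (ih (B - A) A (by omega) (by omega) hA hg2))
    · subst heq
      have : A = 1 := by rw [Nat.gcd_self] at hg; exact hg
      subst this
      intro i j hi1 hi2 hj1 hj2
      have h12 : (meander [1, 1] [1 + 1]).Reachable 1 2 :=
        SimpleGraph.Adj.reachable (by rw [adj_iff]; omega)
      interval_cases i <;> interval_cases j
      · exact SimpleGraph.Reachable.refl _
      · exact h12
      · exact h12.symm
      · exact SimpleGraph.Reachable.refl _
    · have hg2 : Nat.gcd (A - B) B = 1 := by
        rw [Nat.gcd_sub_self_left (by omega)]; exact hg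
      exact reach_step hB hgt (ih (A - B) B (by omega) (by omega) hB hg2)


lemma sameBlock_head (c0 : ℕ) (rest : List ℕ) (i j : ℕ)
    (hi : 0 < i) (hic : i ≤ c0) (hj : 0 < j) (hjc : j ≤ c0) :
    sameBlock (c0 :: rest) i j := by
  refine ⟨0, by simp, ?_, ?_, ?_, ?_⟩ <;> simpa

lemma main_lemma (K B : ℕ) (hK : 1 ≤ K) (hB : 1 ≤ B) (hg : Nat.gcd K B = 1) :
    spectrumBlock [K + B, B] [K + B + B] (Finset.Icc 1 (K + B)) (Finset.Icc 1 (K + B))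
      = extendedValues [K, B] [K + B] := by
  classical
  obtain ⟨φ2, hφ2⟩ := exists_pot_aux (K + B) K B le_rfl hK hB hg
  have hφ2' : IsPot (K + B - B) B φ2 := by rwa [Nat.add_sub_cancel]
  have hφ1 : IsPot (K + B) B (stepφ (K + B) B φ2) :=
    isPot_step hB (by omega) hφ2'
  have reach1 : ReachAll (K + B) B :=
    exists_reach_aux (K + B + B) (K + B) B le_rfl (by omega) hB
      (by rw [Nat.gcd_add_self_left]; exact hg)
  have reach2 : ReachAll K B := exists_reach_aux (K + B) K B le_rfl hK hB hg
  have key : ∀ i j, 1 ≤ i → i ≤ K + B → 1 ≤ j → j ≤ K + B →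
      pathWeight [K + B, B] [K + B + B] i j
        = pathWeight [K, B] [K + B] (K + B + 1 - i) (K + B + 1 - j) := by
    intro i j hi1 hi2 hj1 hj2
    have L := pathWeight_eq hφ1 (reach1 i j hi1 (by omega) hj1 (by omega))
    have R := pathWeight_eq hφ2 (reach2 (K + B + 1 - i) (K + B + 1 - j)
      (by omega) (by omega) (by omega) (by omega))
    rw [L, R]
    unfold stepφ
    rw [if_pos hi2, if_pos hj2]
    ring
  unfold spectrumBlock extendedValues
  simp only [List.sum_cons, List.sum_nil, add_zero]
  have hfilter : ((Finset.Icc 1 (K + B) ×ˢ Finset.Icc 1 (K + B)).filter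
      fun p => seaweedPos [K + B, B] [K + B + B] p.1 p.2)
      = Finset.Icc 1 (K + B) ×ˢ Finset.Icc 1 (K + B) := by
    refine Finset.filter_true_of_mem ?_
    intro p hp
    rw [Finset.mem_product, Finset.mem_Icc, Finset.mem_Icc] at hp
    by_cases hle : p.2 ≤ p.1
    · exact Or.inl ⟨hle, sameBlock_head _ _ _ _ (by omega) (by omega) (by omega) (by omega)⟩
    · exact Or.inr ⟨by omega, sameBlock_head _ _ _ _ (by omega) (by omega) (by omega) (by omega)⟩
  rw [hfilter]
  set S := Finset.Icc 1 (K + B) ×ˢ Finset.Icc 1 (K + B) with hS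
  have hmemS : ∀ p : ℕ × ℕ, p ∈ S ↔ (1 ≤ p.1 ∧ p.1 ≤ K + B) ∧ 1 ≤ p.2 ∧ p.2 ≤ K + B := by
    intro p; rw [hS, Finset.mem_product, Finset.mem_Icc, Finset.mem_Icc]
  set g : ℕ × ℕ → ℕ × ℕ := fun p => (K + B + 1 - p.1, K + B + 1 - p.2) with hg'
  have hinj : Set.InjOn g S := by
    intro p hp q hq hpq
    rw [Finset.mem_coe, hmemS] at hp hq
    simp only [hg', Prod.mk.injEq] at hpq
    rw [Prod.ext_iff]
    omega
  have himg : S.image g = S := by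
    ext p
    rw [Finset.mem_image]
    constructor
    · rintro ⟨q, hq, rfl⟩
      rw [hmemS] at hq ⊢
      simp only [hg']
      omega
    · intro hp
      refine ⟨g p, ?_, ?_⟩
      · rw [hmemS] at hp ⊢
        simp only [hg']
        omega
      · rw [hmemS] at hp
        simp only [hg', Prod.ext_iff]
        constructor <;> omega
  calc S.val.map (fun p => pathWeight [K + B, B] [K + B + B] p.1 p.2)
      = S.val.map ((fun p : ℕ × ℕ => pathWeight [K, B] [K + B] p.1 p.2) ∘ g) := by
        refine Multiset.map_congr rfl ?_
        intro p hp
        rw [Finset.mem_val, hmemS] at hp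
        exact key p.1 p.2 hp.1.1 hp.1.2 hp.2.1 hp.2.2
    _ = (S.val.map g).map (fun p : ℕ × ℕ => pathWeight [K, B] [K + B] p.1 p.2) := by
        rw [Multiset.map_map]
    _ = (S.image g).val.map (fun p : ℕ × ℕ => pathWeight [K, B] [K + B] p.1 p.2) := by
        rw [Finset.image_val_of_injOn hinj]
    _ = S.val.map (fun p : ℕ × ℕ => pathWeight [K, B] [K + B] p.1 p.2) := by
        rw [himg]


/-- For coprime positive `k1, k2` and `m ≥ 1`, the top-left block (rows and columns
`1, …, m k1 + k2`) of the spectrum matrix of `p^A(m k1 + k2 | k1 / (m+1) k1 + k2)`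
consists of the same multiset of values as the extended spectrum matrix of
`p^A((m-1) k1 + k2 | k1 / m k1 + k2)`. -/
theorem statement3 (k1 k2 m : ℕ) (hk1 : 0 < k1) (hk2 : 0 < k2) (hm : 0 < m)
    (hgcd : Nat.gcd k1 k2 = 1) :
    spectrumBlock [m * k1 + k2, k1] [(m + 1) * k1 + k2]
        (Finset.Icc 1 (m * k1 + k2)) (Finset.Icc 1 (m * k1 + k2))
      = extendedValues [(m - 1) * k1 + k2, k1] [m * k1 + k2] := by
  obtain ⟨m', rfl⟩ := Nat.exists_eq_succ_of_ne_zero hm.ne'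
  have e3 : (m' + 1 - 1) * k1 + k2 = m' * k1 + k2 := by simp
  have e2 : (m' + 1 + 1) * k1 + k2 = m' * k1 + k2 + k1 + k1 := by ring
  have e1 : (m' + 1) * k1 + k2 = m' * k1 + k2 + k1 := by ring
  rw [e3, e2, e1]
  have hgK : Nat.gcd (m' * k1 + k2) k1 = 1 := by
    rw [show m' * k1 + k2 = k2 + k1 * m' by ring, Nat.gcd_add_mul_left_left,
      Nat.gcd_comm]
    exact hgcd
  exact main_lemma (m' * k1 + k2) k1 (le_trans hk2 (Nat.le_add_left _ _)) hk1 hgK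

end Seaweed
end

section
/- For every integer k ≥ 1, let g_k = p^A(k|1 / k+1), a Frobenius type-A seaweed on k+1 vertices. Then the multiset { w(P_{i,k+1}(g_k)) : 1 ≤ i ≤ k+1 } is equal to the multiset {0, 1, …, k}, each value occurring exactly once. -/
namespace Seaweed

/-- Position of vertex `v` along the single path of `M(k,1 | k+1)`, counted from `v_{k+1}`. -/
def gNat (k v : ℕ) : ℕ := if 2 * v ≤ k + 1 then 2 * v - 1 else 2 * (k + 1) - 2 * v

/-- Integer-valued potential function: the weight of the path from `v` to `v_{k+1}`. -/
def fInt (k v : ℕ) : ℤ := if 2 * v ≤ k + 1 then 2 * (v : ℤ) - 1 else 2 * ((k : ℤ) + 1) - 2 * v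

lemma bp_a {k x y : ℕ} : blockPair [k, 1] x y ↔ 1 ≤ x ∧ 1 ≤ y ∧ x + y = k + 1 ∧ x ≠ y := by
  constructor
  · rintro ⟨m, hm, hx, hy, hsum, hne⟩
    simp only [List.length_cons, List.length_nil] at hm
    have hm2 : m = 0 ∨ m = 1 := by omega
    rcases hm2 with rfl | rfl <;> simp_all <;> omega
  · rintro ⟨hx, hy, hsum, hne⟩
    exact ⟨0, by simp, by simp only [List.take_zero, List.sum_nil]; omega, by simp only [List.take_zero, List.sum_nil]; omega, by simpa using hsum, hne⟩

lemma bp_b {k x y : ℕ} : blockPair [k + 1] x y ↔ 1 ≤ x ∧ 1 ≤ y ∧ x + y = k + 2 ∧ x ≠ y := by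
  constructor
  · rintro ⟨m, hm, hx, hy, hsum, hne⟩
    simp only [List.length_cons, List.length_nil] at hm
    have hm2 : m = 0 := by omega
    subst hm2; simp_all <;> omega
  · rintro ⟨hx, hy, hsum, hne⟩
    exact ⟨0, by simp, by simp only [List.take_zero, List.sum_nil]; omega, by simp only [List.take_zero, List.sum_nil]; omega, by simpa using hsum, hne⟩

open scoped Classical in
lemma step (k : ℕ) {x y : ℕ} (hadj : (meander [k, 1] [k + 1]).Adj x y) :
    (if dirEdge [k, 1] [k + 1] x y then (1 : ℤ) else -1) = fInt k x - fInt k y := by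
  rcases hadj with ht | hb
  · rw [bp_a] at ht
    obtain ⟨hx, hy, hsum, hne⟩ := ht
    rcases lt_or_gt_of_ne hne with hlt | hgt
    · -- x < y : top edge traversed against orientation
      have hd : ¬ dirEdge [k, 1] [k + 1] x y := by
        rintro (⟨_, h⟩ | ⟨hbp, _⟩)
        · omega
        · rw [bp_b] at hbp; omega
      rw [if_neg hd]
      simp only [fInt]; split_ifs <;> push_cast <;> omega
    · have hd : dirEdge [k, 1] [k + 1] x y :=
        Or.inl ⟨bp_a.mpr ⟨hx, hy, hsum, hne⟩, hgt⟩
      rw [if_pos hd]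
      simp only [fInt]; split_ifs <;> push_cast <;> omega
  · rw [bp_b] at hb
    obtain ⟨hx, hy, hsum, hne⟩ := hb
    rcases lt_or_gt_of_ne hne with hlt | hgt
    · have hd : dirEdge [k, 1] [k + 1] x y :=
        Or.inr ⟨bp_b.mpr ⟨hx, hy, hsum, hne⟩, hlt⟩
      rw [if_pos hd]
      simp only [fInt]; split_ifs <;> push_cast <;> omega
    · have hd : ¬ dirEdge [k, 1] [k + 1] x y := by
        rintro (⟨hbp, _⟩ | ⟨_, h⟩)
        · rw [bp_a] at hbp; omega
        · omega
      rw [if_neg hd]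
      simp only [fInt]; split_ifs <;> push_cast <;> omega

open scoped Classical in
lemma walkWeight_eq_s6 (k : ℕ) {x y : ℕ} (w : (meander [k, 1] [k + 1]).Walk x y) :
    walkWeight [k, 1] [k + 1] w = fInt k x - fInt k y := by
  induction w with
  | nil => simp [walkWeight]
  | cons h p ih =>
    have hstep := step k h
    simp only [walkWeight, SimpleGraph.Walk.darts_cons, List.map_cons, List.sum_cons] at *
    rw [hstep, ih]; ring

lemma reach (k : ℕ) : ∀ n i, gNat k i ≤ n → 1 ≤ i → i ≤ k + 1 →
    (meander [k, 1] [k + 1]).Reachable i (k + 1) := by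
  intro n
  induction n with
  | zero =>
    intro i hg hi1 hi2
    have : i = k + 1 := by
      simp only [gNat] at hg; split_ifs at hg <;> omega
    exact this ▸ SimpleGraph.Reachable.refl _
  | succ n ih =>
    intro i hg hi1 hi2
    by_cases hik : i = k + 1
    · exact hik ▸ SimpleGraph.Reachable.refl _
    · by_cases hsmall : 2 * i ≤ k + 1
      · -- bottom edge to j = k + 2 - i
        have hadj : (meander [k, 1] [k + 1]).Adj i (k + 2 - i) :=
          Or.inr (bp_b.mpr ⟨hi1, by omega, by omega, by omega⟩)
        have hgj : gNat k (k + 2 - i) ≤ n := by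
          simp only [gNat] at hg ⊢; split_ifs at hg ⊢ <;> omega
        exact hadj.reachable.trans (ih (k + 2 - i) hgj (by omega) (by omega))
      · -- top edge to j = k + 1 - i
        have hadj : (meander [k, 1] [k + 1]).Adj i (k + 1 - i) :=
          Or.inl (bp_a.mpr ⟨hi1, by omega, by omega, by omega⟩)
        have hgj : gNat k (k + 1 - i) ≤ n := by
          simp only [gNat] at hg ⊢; split_ifs at hg ⊢ <;> omega
        exact hadj.reachable.trans (ih (k + 1 - i) hgj (by omega) (by omega))

lemma pathWeight_eq_s6 (k i : ℕ) (hi1 : 1 ≤ i) (hi2 : i ≤ k + 1) :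
    pathWeight [k, 1] [k + 1] i (k + 1) = fInt k i := by
  obtain ⟨w⟩ := reach k (gNat k i) i le_rfl hi1 hi2
  have hex : ∃ p : (meander [k, 1] [k + 1]).Walk i (k + 1), p.IsPath :=
    ⟨(w.toPath : (meander [k, 1] [k + 1]).Walk i (k + 1)), w.toPath.2⟩
  rw [pathWeight, dif_pos hex, walkWeight_eq_s6]
  have hf : fInt k (k + 1) = 0 := by
    simp only [fInt]; split_ifs <;> push_cast <;> omega
  rw [hf, sub_zero]

/-- For `k ≥ 1` and `g_k = p^A(k|1 / k+1)`, the multiset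
`{ w(P_{i,k+1}(g_k)) : 1 ≤ i ≤ k+1 }` equals `{0, 1, …, k}`, each value once. -/
theorem statement6 (k : ℕ) (hk : 1 ≤ k) :
    ((Finset.Icc 1 (k + 1)).val.map fun i => pathWeight [k, 1] [k + 1] i (k + 1))
      = (Multiset.range (k + 1)).map (fun i : ℕ => (i : ℤ)) := by
  have h1 : ((Finset.Icc 1 (k + 1)).val.map fun i => pathWeight [k, 1] [k + 1] i (k + 1))
      = (Finset.Icc 1 (k + 1)).val.map fun i => ((gNat k i : ℕ) : ℤ) := by
    apply Multiset.map_congr rfl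
    intro i hi
    rw [Finset.mem_val, Finset.mem_Icc] at hi
    rw [pathWeight_eq_s6 k i hi.1 hi.2]
    simp only [fInt, gNat]; split_ifs <;> push_cast <;> omega
  rw [h1]
  have hinj : Set.InjOn (gNat k) (Finset.Icc 1 (k + 1)) := by
    intro i hi j hj h
    simp only [Finset.coe_Icc, Set.mem_Icc] at hi hj
    simp only [gNat] at h
    split_ifs at h <;> omega
  have himg : Finset.image (gNat k) (Finset.Icc 1 (k + 1)) = Finset.range (k + 1) := by
    ext p
    simp only [Finset.mem_image, Finset.mem_Icc, Finset.mem_range]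
    constructor
    · rintro ⟨i, ⟨hi1, hi2⟩, rfl⟩
      simp only [gNat]; split_ifs <;> omega
    · intro hp
      rcases Nat.even_or_odd p with ⟨m, hm⟩ | ⟨m, hm⟩
      · exact ⟨k + 1 - m, by omega, by simp only [gNat]; split_ifs <;> omega⟩
      · exact ⟨m + 1, by omega, by simp only [gNat]; split_ifs <;> omega⟩
  have hval := Finset.image_val_of_injOn hinj
  rw [himg, Finset.range_val] at hval
  rw [hval, Multiset.map_map]
  rfl

end Seaweed
end

section
/- Let a_1,…,a_m and b_1,…,b_t be positive integers such that g = p^A(a_1|…|a_m|1 / b_1|…|b_t) is a Frobenius type-A seaweed (its meander is a single path) with spectrum S. Then g' = p^A(a_1|…|a_m|2 / b_1|…|b_t|1) is a Frobenius type-A seaweed whose spectrum is the multiset S ∪ {0, 1}. -/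
namespace Seaweed

lemma sum_take_getD_le (c : List ℕ) (k : ℕ) (hk : k < c.length) :
    (c.take k).sum + c.getD k 0 ≤ c.sum := by
  have h1 : (c.take (k+1)).sum = (c.take k).sum + c.getD k 0 := by
    rw [List.getD_eq_getElem c 0 hk]
    exact List.sum_take_succ c k hk
  calc (c.take k).sum + c.getD k 0 = (c.take (k+1)).sum := h1.symm
    _ ≤ (c.take (k+1)).sum + (c.drop (k+1)).sum := Nat.le_add_right _ _
    _ = c.sum := by rw [List.sum_take_add_sum_drop]

lemma take_append_sing (c : List ℕ) (s k : ℕ) (hk : k ≤ c.length) :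
    ((c ++ [s]).take k) = c.take k := by
  rw [List.take_append]
  simp [Nat.sub_eq_zero_of_le hk]

lemma getD_append_lt (c : List ℕ) (s k : ℕ) (hk : k < c.length) :
    (c ++ [s]).getD k 0 = c.getD k 0 := List.getD_append _ _ _ _ hk

lemma getD_append_self (c : List ℕ) (s : ℕ) :
    (c ++ [s]).getD c.length 0 = s := by
  rw [List.getD_append_right _ _ _ _ (le_refl _)]
  simp

lemma blockPair_bounds {c : List ℕ} {i j : ℕ} (h : blockPair c i j) :
    1 ≤ i ∧ i ≤ c.sum ∧ 1 ≤ j ∧ j ≤ c.sum := by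
  obtain ⟨k, hk, hi, hj, hsum, hne⟩ := h
  have := sum_take_getD_le c k hk
  omega

lemma sameBlock_bounds {c : List ℕ} {i j : ℕ} (h : sameBlock c i j) :
    1 ≤ i ∧ i ≤ c.sum ∧ 1 ≤ j ∧ j ≤ c.sum := by
  obtain ⟨k, hk, hi1, hi2, hj1, hj2⟩ := h
  have := sum_take_getD_le c k hk
  omega

lemma blockPair_append (c : List ℕ) (s i j : ℕ) :
    blockPair (c ++ [s]) i j ↔ blockPair c i j ∨
      (c.sum < i ∧ c.sum < j ∧ i + j = 2 * c.sum + s + 1 ∧ i ≠ j) := by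
  constructor
  · rintro ⟨k, hk, hi, hj, hsum, hne⟩
    rw [List.length_append, List.length_singleton] at hk
    rcases lt_or_ge k c.length with hlt | hge
    · left
      rw [take_append_sing c s k hlt.le] at hi hj hsum
      rw [getD_append_lt c s k hlt] at hsum
      exact ⟨k, hlt, hi, hj, hsum, hne⟩
    · right
      have hkeq : k = c.length := by omega
      subst hkeq
      rw [take_append_sing c s _ le_rfl, List.take_length] at hi hj hsum
      rw [getD_append_self] at hsum
      exact ⟨hi, hj, hsum, hne⟩
  · rintro (⟨k, hk, hi, hj, hsum, hne⟩ | ⟨hi, hj, hsum, hne⟩)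
    · exact ⟨k, by simp; omega,
        by rwa [take_append_sing c s k hk.le],
        by rwa [take_append_sing c s k hk.le],
        by rwa [take_append_sing c s k hk.le, getD_append_lt c s k hk], hne⟩
    · refine ⟨c.length, by simp, ?_, ?_, ?_, hne⟩
      · rw [take_append_sing c s _ le_rfl, List.take_length]; exact hi
      · rw [take_append_sing c s _ le_rfl, List.take_length]; exact hj
      · rw [take_append_sing c s _ le_rfl, List.take_length, getD_append_self]; exact hsum

lemma sameBlock_append (c : List ℕ) (s i j : ℕ) :
    sameBlock (c ++ [s]) i j ↔ sameBlock c i j ∨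
      (c.sum < i ∧ i ≤ c.sum + s ∧ c.sum < j ∧ j ≤ c.sum + s) := by
  constructor
  · rintro ⟨k, hk, hi1, hi2, hj1, hj2⟩
    rw [List.length_append, List.length_singleton] at hk
    rcases lt_or_ge k c.length with hlt | hge
    · left
      rw [take_append_sing c s k hlt.le] at hi1 hi2 hj1 hj2
      rw [getD_append_lt c s k hlt] at hi2 hj2
      exact ⟨k, hlt, hi1, hi2, hj1, hj2⟩
    · right
      have hkeq : k = c.length := by omega
      subst hkeq
      rw [take_append_sing c s _ le_rfl, List.take_length] at hi1 hi2 hj1 hj2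
      rw [getD_append_self] at hi2 hj2
      exact ⟨hi1, hi2, hj1, hj2⟩
  · rintro (⟨k, hk, hi1, hi2, hj1, hj2⟩ | ⟨hi1, hi2, hj1, hj2⟩)
    · refine ⟨k, by simp; omega, ?_, ?_, ?_, ?_⟩
      · rw [take_append_sing c s k hk.le]; exact hi1
      · rw [take_append_sing c s k hk.le, getD_append_lt c s k hk]; exact hi2
      · rw [take_append_sing c s k hk.le]; exact hj1
      · rw [take_append_sing c s k hk.le, getD_append_lt c s k hk]; exact hj2
    · refine ⟨c.length, by simp, ?_, ?_, ?_, ?_⟩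
      · rw [take_append_sing c s _ le_rfl, List.take_length]; exact hi1
      · rw [take_append_sing c s _ le_rfl, List.take_length, getD_append_self]; exact hi2
      · rw [take_append_sing c s _ le_rfl, List.take_length]; exact hj1
      · rw [take_append_sing c s _ le_rfl, List.take_length, getD_append_self]; exact hj2

open SimpleGraph Walk
open scoped Classical

lemma path_loop_nil {V : Type*} {G : SimpleGraph V} {v : V} {p : G.Walk v v}
    (hp : p.IsPath) : p = SimpleGraph.Walk.nil := by
  cases p with
  | nil => rfl
  | cons h q =>
    rw [SimpleGraph.Walk.cons_isPath_iff] at hp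
    exact absurd q.end_mem_support hp.2

lemma pathWeight_self (a b : List ℕ) (v : ℕ) : pathWeight a b v v = 0 := by
  have h : ∃ p : (meander a b).Walk v v, p.IsPath := ⟨.nil, SimpleGraph.Walk.IsPath.nil⟩
  simp only [pathWeight, dif_pos h]
  rw [path_loop_nil h.choose_spec]
  simp [walkWeight]

lemma pathWeight_eq_of_isPath {a b : List ℕ} (hac : (meander a b).IsAcyclic) {i j : ℕ}
    (q : (meander a b).Walk i j) (hq : q.IsPath) :
    pathWeight a b i j = walkWeight a b q := by
  have h : ∃ p : (meander a b).Walk i j, p.IsPath := ⟨q, hq⟩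
  simp only [pathWeight, dif_pos h]
  have h2 : (⟨h.choose, h.choose_spec⟩ : (meander a b).Path i j) = ⟨q, hq⟩ :=
    SimpleGraph.isAcyclic_iff_path_unique.mp hac _ _
  rw [Subtype.ext_iff] at h2
  simp only at h2
  rw [h2]

lemma walkWeight_mapLe {a b a' b' : List ℕ} (hle : meander a b ≤ meander a' b')
    (hagree : ∀ x y : ℕ, (meander a b).Adj x y → (dirEdge a' b' x y ↔ dirEdge a b x y))
    {i j : ℕ} (q : (meander a b).Walk i j) :
    walkWeight a' b' (q.mapLe hle) = walkWeight a b q := by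
  simp only [walkWeight, Walk.mapLe, Walk.darts_map, List.map_map]
  congr 1
  apply List.map_congr_left
  intro d _
  have : ((Hom.ofLE hle).mapDart d).toProd = d.toProd := by
    cases d with
    | mk t h => rfl
  simp only [Function.comp_apply, this]
  exact if_congr (hagree d.toProd.1 d.toProd.2 d.adj) rfl rfl

lemma pathWeight_mono {a b a' b' : List ℕ} (hac' : (meander a' b').IsAcyclic)
    (hle : meander a b ≤ meander a' b')
    (hagree : ∀ x y : ℕ, (meander a b).Adj x y → (dirEdge a' b' x y ↔ dirEdge a b x y))
    {i j : ℕ} (hr : (meander a b).Reachable i j) :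
    pathWeight a' b' i j = pathWeight a b i j := by
  have h : ∃ p : (meander a b).Walk i j, p.IsPath := ⟨hr.some.toPath, hr.some.toPath.2⟩
  have hinj : Function.Injective (Hom.ofLE hle) := fun _ _ hxy => hxy
  calc pathWeight a' b' i j = walkWeight a' b' (h.choose.mapLe hle) :=
        pathWeight_eq_of_isPath hac' _ (Walk.map_isPath_of_injective hinj h.choose_spec)
    _ = walkWeight a b h.choose := walkWeight_mapLe hle hagree _
    _ = pathWeight a b i j := by simp only [pathWeight, dif_pos h]

open scoped Classical in
lemma walkWeight_single {a b : List ℕ} {i j : ℕ} (h : (meander a b).Adj i j) :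
    walkWeight a b (Walk.cons h Walk.nil) = if dirEdge a b i j then 1 else -1 := by
  simp [walkWeight]

lemma isAcyclic_pendant {V : Type*} {G G' : SimpleGraph V} {u w : V} (hne : u ≠ w)
    (hadj : ∀ i j, G'.Adj i j ↔ G.Adj i j ∨ (i = w ∧ j = u) ∨ (i = u ∧ j = w))
    (hu : ∀ i j, G.Adj i j → i ≠ u ∧ j ≠ u)
    (hG : G.IsAcyclic) : G'.IsAcyclic := by
  intro v c hc
  by_cases hmem : u ∈ c.support
  · classical
    suffices h : ∀ d : G'.Walk u u, ¬ d.IsCycle by exact h _ (hc.rotate hmem)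
    intro d hd
    cases d with
    | nil => exact hd.ne_nil rfl
    | @cons _ x _ hadj1 p =>
      have hx : x = w := by
        rcases (hadj u x).mp hadj1 with h1 | ⟨h1, _⟩ | ⟨_, h1⟩
        · exact absurd rfl (hu _ _ h1).1
        · exact absurd h1 hne
        · exact h1
      have hne' : u ≠ x := by rw [hx]; exact hne
      obtain ⟨y, hy, q, hq⟩ := p.reverse.exists_eq_cons_of_ne hne'
      have hy' : y = x := by
        rw [hx]
        rcases (hadj u y).mp hy with h1 | ⟨h1, _⟩ | ⟨_, h1⟩
        · exact absurd rfl (hu _ _ h1).1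
        · exact absurd h1 hne
        · exact h1
      have hmem1 : s(u, x) ∈ p.reverse.edges := by
        subst hy'
        rw [hq, Walk.edges_cons]
        exact List.mem_cons_self
      rw [Walk.edges_reverse, List.mem_reverse] at hmem1
      have hnodup := hd.edges_nodup
      rw [Walk.edges_cons, List.nodup_cons] at hnodup
      exact hnodup.1 hmem1
  · have hedges : ∀ e ∈ c.edges, e ∈ G.edgeSet := by
      intro e he
      have h1 := c.edges_subset_edgeSet he
      revert he h1
      refine Sym2.ind (fun x y => ?_) e
      intro he h1
      have hxs : x ∈ c.support := c.fst_mem_support_of_mem_edges he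
      have hys : y ∈ c.support := c.snd_mem_support_of_mem_edges he
      rcases (hadj x y).mp h1 with h2 | ⟨_, h2⟩ | ⟨h2, _⟩
      · exact h2
      · exact absurd (h2 ▸ hys) hmem
      · exact absurd (h2 ▸ hxs) hmem
    exact hG (c.transfer G hedges) (hc.transfer hedges)


lemma adj_new_iff (a b : List ℕ) (hb : b.sum = a.sum + 1) (i j : ℕ) :
    (meander (a ++ [2]) (b ++ [1])).Adj i j ↔ (meander (a ++ [1]) b).Adj i j ∨
      (i = a.sum + 1 ∧ j = a.sum + 2) ∨ (i = a.sum + 2 ∧ j = a.sum + 1) := by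
  show (blockPair (a ++ [2]) i j ∨ blockPair (b ++ [1]) i j) ↔
    (blockPair (a ++ [1]) i j ∨ blockPair b i j) ∨ _
  rw [blockPair_append a 2, blockPair_append b 1, blockPair_append a 1]
  constructor
  · rintro ((h | ⟨h1, h2, h3, h4⟩) | (h | ⟨h1, h2, h3, h4⟩))
    · exact Or.inl (Or.inl (Or.inl h))
    · exact Or.inr (by omega)
    · exact Or.inl (Or.inr h)
    · omega
  · rintro (((h | ⟨h1, h2, h3, h4⟩) | h) | ⟨h1, h2⟩ | ⟨h1, h2⟩)
    · exact Or.inl (Or.inl h)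
    · omega
    · exact Or.inr (Or.inl h)
    · exact Or.inl (Or.inr (by omega))
    · exact Or.inl (Or.inr (by omega))

lemma dirEdge_agree (a b : List ℕ) (x y : ℕ) (hx : x ≤ a.sum + 1) (hy : y ≤ a.sum + 1) :
    dirEdge (a ++ [2]) (b ++ [1]) x y ↔ dirEdge (a ++ [1]) b x y := by
  unfold dirEdge
  rw [blockPair_append a 2, blockPair_append b 1, blockPair_append a 1]
  constructor
  · rintro (⟨h | ⟨h1, h2, h3, h4⟩, hlt⟩ | ⟨h | ⟨h1, h2, h3, h4⟩, hlt⟩)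
    · exact Or.inl ⟨Or.inl h, hlt⟩
    · omega
    · exact Or.inr ⟨h, hlt⟩
    · omega
  · rintro (⟨h | ⟨h1, h2, h3, h4⟩, hlt⟩ | ⟨h, hlt⟩)
    · exact Or.inl ⟨Or.inl h, hlt⟩
    · omega
    · exact Or.inr ⟨Or.inl h, hlt⟩

lemma seaweedPos_new_iff (a b : List ℕ) (hb : b.sum = a.sum + 1) (i j : ℕ) :
    seaweedPos (a ++ [2]) (b ++ [1]) i j ↔ seaweedPos (a ++ [1]) b i j ∨
      (i = a.sum + 2 ∧ j = a.sum + 1) ∨ (i = a.sum + 2 ∧ j = a.sum + 2) := by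
  unfold seaweedPos
  rw [sameBlock_append a 2, sameBlock_append b 1, sameBlock_append a 1, hb]
  constructor
  · rintro (⟨hji, hA | hE⟩ | ⟨hij, hB | hE⟩)
    · exact Or.inl (Or.inl ⟨hji, Or.inl hA⟩)
    · rcases Nat.lt_or_ge i (a.sum + 2) with h | h
      · exact Or.inl (Or.inl ⟨hji, Or.inr (by omega)⟩)
      · have hi : i = a.sum + 2 := by omega
        have hj : j = a.sum + 1 ∨ j = a.sum + 2 := by omega
        rcases hj with h' | h'
        · exact Or.inr (Or.inl ⟨hi, h'⟩)
        · exact Or.inr (Or.inr ⟨hi, h'⟩)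
    · exact Or.inl (Or.inr ⟨hij, hB⟩)
    · exact Or.inr (Or.inr (by omega))
  · rintro ((⟨hji, hA | hE⟩ | ⟨hij, hB⟩) | ⟨h1, h2⟩ | ⟨h1, h2⟩)
    · exact Or.inl ⟨hji, Or.inl hA⟩
    · exact Or.inl ⟨hji, Or.inr (by omega)⟩
    · exact Or.inr ⟨hij, Or.inl hB⟩
    · exact Or.inl ⟨by omega, Or.inr (by omega)⟩
    · exact Or.inl ⟨by omega, Or.inr (by omega)⟩

lemma seaweedPos_old_bounds {a b : List ℕ} (hb : b.sum = a.sum + 1) {i j : ℕ}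
    (h : seaweedPos (a ++ [1]) b i j) :
    1 ≤ i ∧ i ≤ a.sum + 1 ∧ 1 ≤ j ∧ j ≤ a.sum + 1 := by
  have hs1 : (a ++ [1]).sum = a.sum + 1 := by simp
  rcases h with ⟨_, h⟩ | ⟨_, h⟩
  · have := sameBlock_bounds h; rw [hs1] at this; exact this
  · have := sameBlock_bounds h; rw [hb] at this; exact this

lemma seaweedPos_old_corner (a b : List ℕ) :
    seaweedPos (a ++ [1]) b (a.sum + 1) (a.sum + 1) :=
  Or.inl ⟨le_rfl, (sameBlock_append a 1 _ _).mpr (Or.inr (by omega))⟩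

/-- If `g = p^A(a_1|…|a_m|1 / b_1|…|b_t)` is a Frobenius type-A seaweed with
spectrum `S`, then `g' = p^A(a_1|…|a_m|2 / b_1|…|b_t|1)` is a Frobenius type-A
seaweed with spectrum `S ∪ {0, 1}`. -/
theorem statement16 (a b : List ℕ)
    (ha : ∀ x ∈ a, 0 < x) (hb : ∀ x ∈ b, 0 < x)
    (hsum : (a ++ [1]).sum = b.sum)
    (hpath : IsSinglePath (a ++ [1]) b) :
    IsSinglePath (a ++ [2]) (b ++ [1]) ∧
    spectrum (a ++ [2]) (b ++ [1]) = spectrum (a ++ [1]) b + {0, 1} := by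
  classical
  obtain ⟨hacy, hconn, hdup⟩ := hpath
  have hs1 : (a ++ [1]).sum = a.sum + 1 := by simp
  have hs2 : (a ++ [2]).sum = a.sum + 2 := by simp
  have hb' : b.sum = a.sum + 1 := by rw [hs1] at hsum; omega
  have hadj := adj_new_iff a b hb'
  have hboundOld : ∀ i j, (meander (a ++ [1]) b).Adj i j →
      1 ≤ i ∧ i ≤ a.sum + 1 ∧ 1 ≤ j ∧ j ≤ a.sum + 1 := by
    rintro i j (h | h)
    · have := blockPair_bounds h; rw [hs1] at this; exact this
    · have := blockPair_bounds h; rw [hb'] at this; exact this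
  have hle : meander (a ++ [1]) b ≤ meander (a ++ [2]) (b ++ [1]) := by
    intro x y h
    exact (hadj x y).mpr (Or.inl h)
  have hacy' : (meander (a ++ [2]) (b ++ [1])).IsAcyclic := by
    refine isAcyclic_pendant (u := a.sum + 2) (w := a.sum + 1) (by omega) hadj ?_ hacy
    intro i j h
    have := hboundOld i j h
    omega
  have hreach1 : ∀ i ∈ Finset.Icc 1 (a.sum + 2),
      (meander (a ++ [2]) (b ++ [1])).Reachable i (a.sum + 1) := by
    intro i hi
    rw [Finset.mem_Icc] at hi
    rcases Nat.lt_or_ge i (a.sum + 2) with h | h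
    · refine SimpleGraph.Reachable.mono hle (hconn i (a.sum + 1) ?_ ?_)
      · rw [hs1, Finset.mem_Icc]; omega
      · rw [hs1, Finset.mem_Icc]; omega
    · have hi2 : i = a.sum + 2 := by omega
      subst hi2
      exact ((hadj _ _).mpr (Or.inr (Or.inr ⟨rfl, rfl⟩))).reachable
  refine ⟨⟨hacy', ?_, ?_⟩, ?_⟩
  · intro i j hi hj
    rw [hs2] at hi hj
    exact (hreach1 i hi).trans (hreach1 j hj).symm
  · rintro i j ⟨h1, h2⟩
    rw [blockPair_append] at h1 h2
    rcases h2 with h2 | h2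
    · have hbnd := blockPair_bounds h2
      rw [hb'] at hbnd
      rcases h1 with h1 | h1
      · exact hdup i j ⟨(blockPair_append a 1 i j).mpr (Or.inl h1), h2⟩
      · omega
    · omega
  -- spectrum part
  have hagree : ∀ x y, (meander (a ++ [1]) b).Adj x y →
      (dirEdge (a ++ [2]) (b ++ [1]) x y ↔ dirEdge (a ++ [1]) b x y) := by
    intro x y h
    have := hboundOld x y h
    exact dirEdge_agree a b x y (by omega) (by omega)
  have hPW : ∀ i j : ℕ, 1 ≤ i → i ≤ a.sum + 1 → 1 ≤ j → j ≤ a.sum + 1 →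
      pathWeight (a ++ [2]) (b ++ [1]) i j = pathWeight (a ++ [1]) b i j := by
    intro i j hi1 hi2 hj1 hj2
    refine pathWeight_mono hacy' hle hagree (hconn i j ?_ ?_)
    · rw [hs1, Finset.mem_Icc]; omega
    · rw [hs1, Finset.mem_Icc]; omega
  have hposPair : (meander (a ++ [2]) (b ++ [1])).Adj (a.sum + 2) (a.sum + 1) :=
    (hadj _ _).mpr (Or.inr (Or.inr ⟨rfl, rfl⟩))
  have hPW1 : pathWeight (a ++ [2]) (b ++ [1]) (a.sum + 2) (a.sum + 1) = 1 := by
    rw [pathWeight_eq_of_isPath hacy' (SimpleGraph.Walk.cons hposPair SimpleGraph.Walk.nil) ?_]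
    · rw [walkWeight_single, if_pos]
      refine Or.inl ⟨?_, by omega⟩
      rw [blockPair_append]
      exact Or.inr ⟨by omega, by omega, by omega, by omega⟩
    · rw [SimpleGraph.Walk.cons_isPath_iff]
      refine ⟨SimpleGraph.Walk.IsPath.nil, ?_⟩
      simp only [SimpleGraph.Walk.support_nil, List.mem_singleton]
      omega
  have hF : (Finset.Icc 1 (a.sum + 2) ×ˢ Finset.Icc 1 (a.sum + 2)).filter
        (fun p => seaweedPos (a ++ [2]) (b ++ [1]) p.1 p.2) =
      insert (a.sum + 2, a.sum + 1) (insert (a.sum + 2, a.sum + 2)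
        ((Finset.Icc 1 (a.sum + 1) ×ˢ Finset.Icc 1 (a.sum + 1)).filter
          (fun p => seaweedPos (a ++ [1]) b p.1 p.2))) := by
    ext ⟨i, j⟩
    simp only [Finset.mem_filter, Finset.mem_product, Finset.mem_Icc, Finset.mem_insert,
      Prod.mk.injEq]
    rw [seaweedPos_new_iff a b hb' i j]
    constructor
    · rintro ⟨⟨⟨hi1, hi2⟩, hj1, hj2⟩, hp | hp | hp⟩
      · have := seaweedPos_old_bounds hb' hp
        exact Or.inr (Or.inr ⟨⟨⟨hi1, by omega⟩, hj1, by omega⟩, hp⟩)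
      · exact Or.inl hp
      · exact Or.inr (Or.inl hp)
    · rintro (⟨h1, h2⟩ | ⟨h1, h2⟩ | ⟨⟨⟨hi1, hi2⟩, hj1, hj2⟩, hp⟩)
      · exact ⟨⟨⟨by omega, by omega⟩, by omega, by omega⟩, Or.inr (Or.inl ⟨h1, h2⟩)⟩
      · exact ⟨⟨⟨by omega, by omega⟩, by omega, by omega⟩, Or.inr (Or.inr ⟨h1, h2⟩)⟩
      · exact ⟨⟨⟨hi1, by omega⟩, hj1, by omega⟩, Or.inl hp⟩
  have hnm2 : (a.sum + 2, a.sum + 2) ∉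
      (Finset.Icc 1 (a.sum + 1) ×ˢ Finset.Icc 1 (a.sum + 1)).filter
        (fun p => seaweedPos (a ++ [1]) b p.1 p.2) := by
    rw [Finset.mem_filter, Finset.mem_product, Finset.mem_Icc]
    rintro ⟨⟨⟨_, h⟩, _⟩, _⟩
    omega
  have hnm1 : (a.sum + 2, a.sum + 1) ∉ insert (a.sum + 2, a.sum + 2)
      ((Finset.Icc 1 (a.sum + 1) ×ˢ Finset.Icc 1 (a.sum + 1)).filter
        (fun p => seaweedPos (a ++ [1]) b p.1 p.2)) := by
    rw [Finset.mem_insert]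
    rintro (h | h)
    · rw [Prod.mk.injEq] at h; omega
    · rw [Finset.mem_filter, Finset.mem_product, Finset.mem_Icc] at h
      obtain ⟨⟨⟨_, h⟩, _⟩, _⟩ := h
      omega
  have hM : spectrumBlock (a ++ [2]) (b ++ [1]) (Finset.Icc 1 (a.sum + 2))
        (Finset.Icc 1 (a.sum + 2)) =
      1 ::ₘ 0 ::ₘ spectrumBlock (a ++ [1]) b (Finset.Icc 1 (a.sum + 1))
        (Finset.Icc 1 (a.sum + 1)) := by
    unfold spectrumBlock
    rw [hF, Finset.insert_val_of_notMem hnm1, Finset.insert_val_of_notMem hnm2,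
      Multiset.map_cons, Multiset.map_cons]
    rw [hPW1, pathWeight_self]
    congr 2
    refine Multiset.map_congr rfl ?_
    rintro ⟨i, j⟩ hp
    rw [Finset.mem_val, Finset.mem_filter, Finset.mem_product, Finset.mem_Icc,
      Finset.mem_Icc] at hp
    exact hPW i j hp.1.1.1 hp.1.1.2 hp.1.2.1 hp.1.2.2
  have h0mem : (0 : ℤ) ∈ spectrumBlock (a ++ [1]) b (Finset.Icc 1 (a.sum + 1))
      (Finset.Icc 1 (a.sum + 1)) := by
    unfold spectrumBlock
    rw [Multiset.mem_map]
    refine ⟨(a.sum + 1, a.sum + 1), ?_, pathWeight_self _ _ _⟩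
    simp only [Finset.mem_val, Finset.mem_filter, Finset.mem_product, Finset.mem_Icc]
    exact ⟨⟨⟨by omega, by omega⟩, by omega, by omega⟩, seaweedPos_old_corner a b⟩
  unfold spectrum
  rw [hs1, hs2, hM]
  set M := spectrumBlock (a ++ [1]) b (Finset.Icc 1 (a.sum + 1)) (Finset.Icc 1 (a.sum + 1))
    with hMdef
  have hc0 : 0 < Multiset.count 0 M := Multiset.count_pos.mpr h0mem
  rw [Multiset.ext]
  intro x
  by_cases hx0 : x = (0 : ℤ)
  · subst hx0
    simp only [Multiset.count_sub, Multiset.count_add, Multiset.count_cons,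
      Multiset.count_singleton, Multiset.insert_eq_cons]
    norm_num
    omega
  · by_cases hx1 : x = (1 : ℤ)
    · subst hx1
      simp only [Multiset.count_sub, Multiset.count_add, Multiset.count_cons,
        Multiset.count_singleton, Multiset.insert_eq_cons]
      norm_num
    · simp only [Multiset.count_sub, Multiset.count_add, Multiset.count_cons,
        Multiset.count_singleton, Multiset.insert_eq_cons]
      simp [hx0, hx1]

end Seaweed
end
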